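/- arXiv:2006.15878 — 2 statements merged into one kernel-verified Lean document; each statement's English description precedes it below -/
import Mathlib

section
/- Let γ : ℝ → ℂ be a C² curve that is L-periodic (L > 0), injective on [0, L), parametrized by arclength (‖γ'(s)‖ = 1 for all s), with signed curvature k(s) = Im(conj(γ'(s)) · γ''(s)) satisfying 0 ≤ k(s) ≤ λ for a constant λ > 0 and all s. Then for every s₀ ∈ ℝ, the closed disc of radius 1/λ centered at γ(s₀) + (1/λ)·i·γ'(s₀) (the disc of radius 1/λ tangent to the curve at γ(s₀) on the side of the leftward normal) is contained in the convex hull of the image of γ. -/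
open Complex Set

lemma blaschkeAux_periodic_const_fwd {g : ℝ → ℝ} {L s₀ : ℝ} (hL : 0 < L)
    (hper : Function.Periodic g L)
    (hmono : ∀ a b, s₀ ≤ a → a ≤ b → g a ≤ g b) {b : ℝ} (hb : s₀ ≤ b) : g b = g s₀ := by
  refine le_antisymm ?_ (hmono s₀ b le_rfl hb)
  obtain ⟨n, hn⟩ := exists_nat_ge ((b - s₀) / L)
  have hbn : b ≤ s₀ + n * L := by
    rw [div_le_iff₀ hL] at hn; linarith
  calc g b ≤ g (s₀ + n * L) := hmono b _ hb hbn
    _ = g s₀ := (hper.nat_mul n) s₀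

lemma blaschkeAux_periodic_const_bwd {g : ℝ → ℝ} {L s₀ : ℝ} (hL : 0 < L)
    (hper : Function.Periodic g L)
    (hanti : ∀ a b, b ≤ s₀ → a ≤ b → g b ≤ g a) {b : ℝ} (hb : b ≤ s₀) : g b = g s₀ := by
  refine le_antisymm ?_ (hanti b s₀ le_rfl hb)
  obtain ⟨n, hn⟩ := exists_nat_ge ((s₀ - b) / L)
  have hbn : s₀ - n * L ≤ b := by
    rw [div_le_iff₀ hL] at hn; linarith
  calc g b ≤ g (s₀ - n * L) := hanti _ b hb hbn
    _ = g s₀ := hper.sub_nat_mul_eq n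

lemma blaschkeAux_Efwd {g φ k : ℝ → ℝ} {lam a b : ℝ} (hlam : 0 < lam) (hab : a ≤ b)
    (hg : ∀ s, HasDerivAt g (Real.sin (φ s)) s) (hφ : ∀ s, HasDerivAt φ (k s) s)
    (hk : ∀ s, k s ≤ lam) (hsin : ∀ s ∈ Set.Icc a b, 0 ≤ Real.sin (φ s)) :
    g a + Real.cos (φ a) / lam ≤ g b + Real.cos (φ b) / lam := by
  have hF : ∀ s, HasDerivAt (fun t => g t + Real.cos (φ t) / lam)
      (Real.sin (φ s) + (-Real.sin (φ s) * k s) / lam) s := fun s =>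
    (hg s).add (((Real.hasDerivAt_cos (φ s)).comp s (hφ s)).div_const lam)
  have hmono := monotoneOn_of_deriv_nonneg (convex_Icc a b)
    (fun s _ => (hF s).continuousAt.continuousWithinAt)
    (fun s _ => (hF s).differentiableAt.differentiableWithinAt)
    (fun s hs => by
      rw [interior_Icc] at hs
      rw [(hF s).deriv]
      have h1 : 0 ≤ Real.sin (φ s) := hsin s (Ioo_subset_Icc_self hs)
      have h2 : k s ≤ lam := hk s
      have heq : Real.sin (φ s) + (-Real.sin (φ s) * k s) / lam
          = Real.sin (φ s) * (lam - k s) / lam := by field_simp; ring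
      rw [heq]
      exact div_nonneg (mul_nonneg h1 (by linarith)) hlam.le)
  exact hmono (left_mem_Icc.2 hab) (right_mem_Icc.2 hab) hab

lemma blaschkeAux_Ebwd {g φ k : ℝ → ℝ} {lam a b : ℝ} (hlam : 0 < lam) (hab : a ≤ b)
    (hg : ∀ s, HasDerivAt g (Real.sin (φ s)) s) (hφ : ∀ s, HasDerivAt φ (k s) s)
    (hk : ∀ s, k s ≤ lam) (hsin : ∀ s ∈ Set.Icc a b, Real.sin (φ s) ≤ 0) :
    g b + Real.cos (φ b) / lam ≤ g a + Real.cos (φ a) / lam := by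
  have hF : ∀ s, HasDerivAt (fun t => g t + Real.cos (φ t) / lam)
      (Real.sin (φ s) + (-Real.sin (φ s) * k s) / lam) s := fun s =>
    (hg s).add (((Real.hasDerivAt_cos (φ s)).comp s (hφ s)).div_const lam)
  have hanti := antitoneOn_of_deriv_nonpos (convex_Icc a b)
    (fun s _ => (hF s).continuousAt.continuousWithinAt)
    (fun s _ => (hF s).differentiableAt.differentiableWithinAt)
    (fun s hs => by
      rw [interior_Icc] at hs
      rw [(hF s).deriv]
      have h1 : Real.sin (φ s) ≤ 0 := hsin s (Ioo_subset_Icc_self hs)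
      have h2 : k s ≤ lam := hk s
      have heq : Real.sin (φ s) + (-Real.sin (φ s) * k s) / lam
          = Real.sin (φ s) * (lam - k s) / lam := by field_simp; ring
      rw [heq]
      exact div_nonpos_of_nonpos_of_nonneg (mul_nonpos_of_nonpos_of_nonneg h1 (by linarith)) hlam.le)
  exact hanti (left_mem_Icc.2 hab) (right_mem_Icc.2 hab) hab


lemma blaschkeAux_isCompact_convexHull {s : Set ℂ} (hne : s.Nonempty) (hs : IsCompact s) :
    IsCompact (convexHull ℝ s) := by
  classical
  obtain ⟨x₀, hx₀⟩ := hne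
  have hK : IsCompact ((stdSimplex ℝ (Fin 3)) ×ˢ (Set.univ.pi fun _ : Fin 3 => s)) :=
    (isCompact_stdSimplex _ _).prod (isCompact_univ_pi fun _ => hs)
  have hT : Continuous fun p : (Fin 3 → ℝ) × (Fin 3 → ℂ) => ∑ i, p.1 i • p.2 i := by
    refine continuous_finset_sum _ fun i _ => ?_
    exact ((continuous_apply i).comp continuous_fst).smul
      ((continuous_apply i).comp continuous_snd)
  have himg : (fun p : (Fin 3 → ℝ) × (Fin 3 → ℂ) => ∑ i, p.1 i • p.2 i) ''
      ((stdSimplex ℝ (Fin 3)) ×ˢ (Set.univ.pi fun _ : Fin 3 => s)) = convexHull ℝ s := by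
    apply Subset.antisymm
    · rintro x ⟨⟨w, z⟩, ⟨hw, hz⟩, rfl⟩
      exact (convex_convexHull ℝ s).sum_mem (fun i _ => hw.1 i) hw.2
        (fun i _ => subset_convexHull ℝ s (hz i (mem_univ i)))
    · intro x hx
      obtain ⟨ι, hfin, z, w, hzs, hai, hwpos, hwsum, hrep⟩ :=
        eq_pos_convex_span_of_mem_convexHull hx
      have hcard : Fintype.card ι ≤ 3 := by
        have h := hai.card_le_finrank_succ
        have h2 : Module.finrank ℝ (vectorSpan ℝ (Set.range z)) ≤ 2 := by
          have h3 := Submodule.finrank_le (vectorSpan ℝ (Set.range z))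
          simpa [Complex.finrank_real_complex] using h3
        omega
      obtain ⟨e⟩ : Nonempty (ι ↪ Fin 3) := Function.Embedding.nonempty_iff_card_le.2
        (by simpa using hcard)
      set w' : Fin 3 → ℝ := fun j => if h : ∃ i, e i = j then w h.choose else 0 with hw'def
      set z' : Fin 3 → ℂ := fun j => if h : ∃ i, e i = j then z h.choose else x₀ with hz'def
      have hw'e : ∀ i, w' (e i) = w i := fun i => by
        have h : ∃ i', e i' = e i := ⟨i, rfl⟩
        simp only [hw'def, dif_pos h]
        exact congrArg w (e.injective h.choose_spec)
      have hz'e : ∀ i, z' (e i) = z i := fun i => by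
        have h : ∃ i', e i' = e i := ⟨i, rfl⟩
        simp only [hz'def, dif_pos h]
        exact congrArg z (e.injective h.choose_spec)
      have hmem : ∀ (j : Fin 3), j ∉ Finset.univ.map e → ¬ ∃ i, e i = j := by
        intro j hj h
        obtain ⟨i, hi⟩ := h
        exact hj (Finset.mem_map.2 ⟨i, Finset.mem_univ i, hi⟩)
      have hw'0 : ∀ (j : Fin 3), j ∉ Finset.univ.map e → w' j = 0 := fun j hj => by
        simp only [hw'def, dif_neg (hmem j hj)]
      refine ⟨⟨w', z'⟩, ⟨⟨fun j => ?_, ?_⟩, fun j _ => ?_⟩, ?_⟩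
      · show 0 ≤ w' j
        by_cases h : ∃ i, e i = j
        · simp only [hw'def, dif_pos h]; exact (hwpos _).le
        · simp only [hw'def, dif_neg h]; exact le_rfl
      · show ∑ j : Fin 3, w' j = 1
        rw [← hwsum]
        rw [← Finset.sum_subset (Finset.subset_univ (Finset.univ.map e)) (fun j _ hj => hw'0 j hj),
          Finset.sum_map]
        exact Finset.sum_congr rfl (fun i _ => hw'e i)
      · show z' j ∈ s
        by_cases h : ∃ i, e i = j
        · simp only [hz'def, dif_pos h]; exact hzs ⟨h.choose, rfl⟩
        · simp only [hz'def, dif_neg h]; exact hx₀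
      · show ∑ j : Fin 3, w' j • z' j = x
        rw [← hrep]
        rw [← Finset.sum_subset (Finset.subset_univ (Finset.univ.map e))
          (fun j _ hj => by rw [hw'0 j hj, zero_smul]), Finset.sum_map]
        exact Finset.sum_congr rfl (fun i _ => by rw [hw'e i, hz'e i])
  rw [← himg]
  exact hK.image hT


lemma blaschkeAux_key (γ : ℝ → ℂ) (θ k g : ℝ → ℝ) (L lam α s₀ : ℝ) (hL : 0 < L) (hlam : 0 < lam)
    (hγ : ∀ s, HasDerivAt γ (Complex.exp (↑(θ s) * Complex.I)) s)
    (hperγ : Function.Periodic γ L)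
    (hθ : ∀ s, HasDerivAt θ (k s) s)
    (hk0 : ∀ s, 0 ≤ k s) (hk1 : ∀ s, k s ≤ lam)
    (hg : ∀ s, HasDerivAt g (Real.sin (θ s - α)) s)
    (hperg : Function.Periodic g L)
    (hφ0 : θ s₀ - α ∈ Set.Ico (-Real.pi) Real.pi) :
    ∃ s₁, g s₀ + (1 + Real.cos (θ s₀ - α)) / lam ≤ g s₁ := by
  have hπ : 0 < Real.pi := Real.pi_pos
  set φ : ℝ → ℝ := fun s => θ s - α with hφdef
  have hφd : ∀ s, HasDerivAt φ (k s) s := fun s => (hθ s).sub_const α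
  have hφmono : Monotone φ := monotone_of_deriv_nonneg (fun s => (hφd s).differentiableAt)
    (fun s => by rw [(hφd s).deriv]; exact hk0 s)
  have hφcont : Continuous φ :=
    (Differentiable.continuous fun s => (hφd s).differentiableAt)
  have hgd : ∀ s, HasDerivAt g (Real.sin (φ s)) s := hg
  have hφ0' : φ s₀ ∈ Set.Ico (-Real.pi) Real.pi := hφ0
  have hgcont : Continuous g := Differentiable.continuous fun s => (hgd s).differentiableAt
  have hθcont : Continuous θ := Differentiable.continuous fun s => (hθ s).differentiableAt
  rcases le_or_gt 0 (φ s₀) with h0 | h0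
  · -- forward case
    by_cases hex : ∃ s, s₀ ≤ s ∧ Real.pi ≤ φ s
    · obtain ⟨s₂, hs₂, hπ₂⟩ := hex
      have hmem : Real.pi ∈ φ '' (Icc s₀ s₂) :=
        intermediate_value_Icc hs₂ hφcont.continuousOn ⟨hφ0'.2.le, hπ₂⟩
      obtain ⟨s₁, hs₁mem, hs₁⟩ := hmem
      refine ⟨s₁, ?_⟩
      have hE := blaschkeAux_Efwd hlam hs₁mem.1 hgd hφd hk1 (fun s hs =>
        Real.sin_nonneg_of_nonneg_of_le_pi (le_trans h0 (hφmono hs.1))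
          (by rw [← hs₁]; exact hφmono hs.2))
      rw [hs₁, Real.cos_pi] at hE
      have e1 : (1 + Real.cos (φ s₀)) / lam = Real.cos (φ s₀) / lam + 1 / lam := by ring
      have e2 : (-1 : ℝ) / lam = -(1 / lam) := by ring
      rw [e2] at hE
      show g s₀ + (1 + Real.cos (φ s₀)) / lam ≤ g s₁
      rw [e1]
      linarith
    · push_neg at hex
      exfalso
      have hsin : ∀ s, s₀ ≤ s → 0 ≤ Real.sin (φ s) := fun s hs =>
        Real.sin_nonneg_of_nonneg_of_le_pi (le_trans h0 (hφmono hs)) (hex s hs).le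
      have hmono : ∀ a b, s₀ ≤ a → a ≤ b → g a ≤ g b := by
        intro a b ha hab
        have hm := monotoneOn_of_deriv_nonneg (convex_Icc a b)
          hgcont.continuousOn
          (fun s _ => (hgd s).differentiableAt.differentiableWithinAt)
          (fun s hs => by
            rw [interior_Icc] at hs
            rw [(hgd s).deriv]
            exact hsin s (ha.trans hs.1.le))
        exact hm (left_mem_Icc.2 hab) (right_mem_Icc.2 hab) hab
      have hconst : ∀ b, s₀ ≤ b → g b = g s₀ := fun b hb =>
        blaschkeAux_periodic_const_fwd hL hperg hmono hb
      have hsin0 : ∀ s, s₀ < s → Real.sin (φ s) = 0 := by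
        intro s hs
        have hev : g =ᶠ[nhds s] fun _ => g s₀ := by
          filter_upwards [isOpen_Ioi.mem_nhds hs] with t ht
          exact hconst t ht.le
        have h0' : HasDerivAt g 0 s := (hasDerivAt_const s (g s₀)).congr_of_eventuallyEq hev
        exact (hgd s).unique h0'
      have hφeq : ∀ s, s₀ < s → φ s = 0 := by
        intro s hs
        by_contra hne
        have hpos : 0 < φ s := lt_of_le_of_ne (h0.trans (hφmono hs.le)) (Ne.symm hne)
        have := Real.sin_pos_of_pos_of_lt_pi hpos (hex s hs.le)
        rw [hsin0 s hs] at this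
        exact lt_irrefl 0 this
      have hθeq : ∀ s, s₀ < s → θ s = α := by
        intro s hs
        have := hφeq s hs
        simp only [hφdef] at this
        linarith
      have hcontexp : Continuous fun s : ℝ => Complex.exp (↑(θ s) * Complex.I) :=
        Complex.continuous_exp.comp ((Complex.continuous_ofReal.comp hθcont).mul continuous_const)
      have hint : ∫ s in (s₀ + 1)..(s₀ + 1 + L), Complex.exp (↑(θ s) * Complex.I)
          = γ (s₀ + 1 + L) - γ (s₀ + 1) :=
        intervalIntegral.integral_eq_sub_of_hasDerivAt (fun x _ => hγ x)
          (hcontexp.intervalIntegrable _ _)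
      have hzero : γ (s₀ + 1 + L) - γ (s₀ + 1) = 0 := by
        rw [hperγ (s₀ + 1)]; ring
      have hcongr : ∫ s in (s₀ + 1)..(s₀ + 1 + L), Complex.exp (↑(θ s) * Complex.I)
          = ∫ _ in (s₀ + 1)..(s₀ + 1 + L), Complex.exp (↑α * Complex.I) := by
        apply intervalIntegral.integral_congr
        intro t ht
        rw [uIcc_of_le (by linarith)] at ht
        show Complex.exp (↑(θ t) * Complex.I) = Complex.exp (↑α * Complex.I)
        rw [hθeq t (by linarith [ht.1])]
      rw [hcongr, intervalIntegral.integral_const, hzero] at hint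
      have hL' : (s₀ + 1 + L - (s₀ + 1)) = L := by ring
      rw [hL'] at hint
      have : (L : ℂ) * Complex.exp (↑α * Complex.I) = 0 := by
        rw [← Complex.real_smul]; exact hint
      rcases mul_eq_zero.mp this with h | h
      · exact hL.ne' (by exact_mod_cast h)
      · exact Complex.exp_ne_zero _ h
  · -- backward case
    rcases eq_or_lt_of_le hφ0'.1 with heq | hlt
    · refine ⟨s₀, ?_⟩
      show g s₀ + (1 + Real.cos (φ s₀)) / lam ≤ g s₀
      rw [← heq, Real.cos_neg, Real.cos_pi]
      norm_num
    · by_cases hex : ∃ s, s ≤ s₀ ∧ φ s ≤ -Real.pi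
      · obtain ⟨s₂, hs₂, hπ₂⟩ := hex
        have hmem : -Real.pi ∈ φ '' (Icc s₂ s₀) :=
          intermediate_value_Icc hs₂ hφcont.continuousOn ⟨hπ₂, hlt.le⟩
        obtain ⟨s₁, hs₁mem, hs₁⟩ := hmem
        refine ⟨s₁, ?_⟩
        have hE := blaschkeAux_Ebwd hlam hs₁mem.2 hgd hφd hk1 (fun s hs => by
          have h1 : -Real.pi ≤ φ s := by rw [← hs₁]; exact hφmono hs.1
          have h2 : φ s ≤ φ s₀ := hφmono hs.2
          have h3 : 0 ≤ Real.sin (-(φ s)) :=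
            Real.sin_nonneg_of_nonneg_of_le_pi (by linarith) (by linarith)
          rw [Real.sin_neg] at h3
          linarith)
        rw [hs₁, Real.cos_neg, Real.cos_pi] at hE
        have e1 : (1 + Real.cos (φ s₀)) / lam = Real.cos (φ s₀) / lam + 1 / lam := by ring
        have e2 : (-1 : ℝ) / lam = -(1 / lam) := by ring
        rw [e2] at hE
        show g s₀ + (1 + Real.cos (φ s₀)) / lam ≤ g s₁
        rw [e1]
        linarith
      · push_neg at hex
        exfalso
        have hsin : ∀ s, s ≤ s₀ → Real.sin (φ s) ≤ 0 := by
          intro s hs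
          have h1 : -Real.pi < φ s := hex s hs
          have h2 : φ s ≤ φ s₀ := hφmono hs
          have h3 : 0 ≤ Real.sin (-(φ s)) :=
            Real.sin_nonneg_of_nonneg_of_le_pi (by linarith) (by linarith)
          rw [Real.sin_neg] at h3
          linarith
        have hanti : ∀ a b, b ≤ s₀ → a ≤ b → g b ≤ g a := by
          intro a b hb hab
          have hm := antitoneOn_of_deriv_nonpos (convex_Icc a b)
            hgcont.continuousOn
            (fun s _ => (hgd s).differentiableAt.differentiableWithinAt)
            (fun s hs => by
              rw [interior_Icc] at hs
              rw [(hgd s).deriv]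
              exact hsin s (hs.2.le.trans hb))
          exact hm (left_mem_Icc.2 hab) (right_mem_Icc.2 hab) hab
        have hconst : ∀ b, b ≤ s₀ → g b = g s₀ := fun b hb =>
          blaschkeAux_periodic_const_bwd hL hperg hanti hb
        have hsin0 : Real.sin (φ (s₀ - 1)) = 0 := by
          have hev : g =ᶠ[nhds (s₀ - 1)] fun _ => g s₀ := by
            filter_upwards [isOpen_Iio.mem_nhds (show s₀ - 1 < s₀ by linarith)] with t ht
            exact hconst t ht.le
          have h0' : HasDerivAt g 0 (s₀ - 1) :=
            (hasDerivAt_const (s₀ - 1) (g s₀)).congr_of_eventuallyEq hev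
          exact (hgd (s₀ - 1)).unique h0'
        have h1 : -Real.pi < φ (s₀ - 1) := hex _ (by linarith)
        have h2 : φ (s₀ - 1) ≤ φ s₀ := hφmono (by linarith)
        have h3 : 0 < Real.sin (-(φ (s₀ - 1))) :=
          Real.sin_pos_of_pos_of_lt_pi (by linarith) (by linarith)
        rw [Real.sin_neg, hsin0] at h3
        simp at h3

/-- **Blaschke's rolling theorem, part II.** For a closed unit-speed `C²` plane curve whose
signed curvature satisfies `0 ≤ k ≤ lam`, the closed disc of radius `1/lam` tangent to the
curve at any of its points (on the side of the leftward normal) is contained in the convex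
hull of the image of the curve. -/
theorem blaschke_rolling_II (γ : ℝ → ℂ) (L lam : ℝ) (hL : 0 < L) (hlam : 0 < lam)
    (hC2 : ContDiff ℝ 2 γ) (hper : Function.Periodic γ L)
    (hinj : Set.InjOn γ (Set.Ico 0 L))
    (hunit : ∀ s : ℝ, ‖deriv γ s‖ = 1)
    (hcurv : ∀ s : ℝ,
      0 ≤ ((starRingEnd ℂ) (deriv γ s) * deriv (deriv γ) s).im ∧
      ((starRingEnd ℂ) (deriv γ s) * deriv (deriv γ) s).im ≤ lam) :
    ∀ s₀ : ℝ,
      Metric.closedBall (γ s₀ + (1 / lam : ℝ) * Complex.I * deriv γ s₀) (1 / lam)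
        ⊆ convexHull ℝ (Set.range γ) := by
  have hπ : 0 < Real.pi := Real.pi_pos
  -- regularity facts
  have hd1 : Differentiable ℝ γ := hC2.differentiable two_ne_zero
  have h21 : ContDiff ℝ (1 + 1) γ := by rw [one_add_one_eq_two]; exact hC2
  have hder' : ContDiff ℝ 1 (deriv γ) := (contDiff_succ_iff_deriv.mp h21).2.2
  have hd2 : Differentiable ℝ (deriv γ) := hder'.differentiable one_ne_zero
  have hcont'' : Continuous (deriv (deriv γ)) := (contDiff_one_iff_deriv.mp hder').2
  have hcont' : Continuous (deriv γ) := hd2.continuous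
  have hder1 : ∀ s, HasDerivAt γ (deriv γ s) s := fun s => (hd1 s).hasDerivAt
  have hder2 : ∀ s, HasDerivAt (deriv γ) (deriv (deriv γ) s) s := fun s => (hd2 s).hasDerivAt
  -- conj γ' * γ' = 1
  have hunit' : ∀ s, (starRingEnd ℂ) (deriv γ s) * deriv γ s = 1 := by
    intro s
    have h1 : Complex.normSq (deriv γ s) = 1 := by
      have h := hunit s
      rw [Complex.normSq_eq_norm_sq, h]; norm_num
    rw [mul_comm, Complex.mul_conj, h1]; norm_num
  -- orthogonality
  have horth : ∀ s, (starRingEnd ℂ) (deriv (deriv γ) s) * deriv γ s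
      + (starRingEnd ℂ) (deriv γ s) * deriv (deriv γ) s = 0 := by
    intro s
    have hstar : HasDerivAt (fun t => (starRingEnd ℂ) (deriv γ t))
        ((starRingEnd ℂ) (deriv (deriv γ) s)) s := by
      simpa only [starRingEnd_apply] using (hder2 s).star
    have hprod := hstar.mul (hder2 s)
    have hconsteq : (fun t => (starRingEnd ℂ) (deriv γ t) * deriv γ t) = fun _ => (1:ℂ) :=
      funext hunit'
    have hconst : HasDerivAt (fun t => (starRingEnd ℂ) (deriv γ t) * deriv γ t) 0 s := by
      rw [hconsteq]; exact hasDerivAt_const s 1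
    exact hprod.unique hconst
  set k : ℝ → ℝ := fun s => ((starRingEnd ℂ) (deriv γ s) * deriv (deriv γ) s).im with hkdef
  have hre0 : ∀ s, ((starRingEnd ℂ) (deriv γ s) * deriv (deriv γ) s).re = 0 := by
    intro s
    have h := congrArg Complex.re (horth s)
    simp only [Complex.add_re, Complex.mul_re, Complex.conj_re, Complex.conj_im,
      Complex.zero_re, neg_mul, sub_neg_eq_add] at h
    simp only [Complex.mul_re, Complex.conj_re, Complex.conj_im, neg_mul, sub_neg_eq_add]
    linarith
  have hconjk : ∀ s, (starRingEnd ℂ) (deriv γ s) * deriv (deriv γ) s = ↑(k s) * Complex.I := by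
    intro s
    refine Complex.ext ?_ ?_
    · rw [hre0 s]; simp
    · simp [hkdef]
  have hsecond : ∀ s, deriv (deriv γ) s = deriv γ s * (↑(k s) * Complex.I) := by
    intro s
    calc deriv (deriv γ) s
        = (deriv γ s * (starRingEnd ℂ) (deriv γ s)) * deriv (deriv γ) s := by
          rw [mul_comm (deriv γ s), hunit' s, one_mul]
      _ = deriv γ s * ((starRingEnd ℂ) (deriv γ s) * deriv (deriv γ) s) := by ring
      _ = deriv γ s * (↑(k s) * Complex.I) := by rw [hconjk s]
  have hconjcont : Continuous fun s => (starRingEnd ℂ) (deriv γ s) := by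
    have h := Complex.conjCLE.continuous.comp hcont'
    exact Complex.continuous_conj.comp hcont'
  have hkcont : Continuous k := Complex.continuous_im.comp (hconjcont.mul hcont'')
  -- angle function
  set θ : ℝ → ℝ := fun s => Complex.arg (deriv γ 0) + ∫ t in (0:ℝ)..s, k t with hθdef
  have hθd : ∀ s, HasDerivAt θ (k s) s := fun s =>
    HasDerivAt.const_add _ ((hkcont.integral_hasStrictDerivAt 0 s).hasDerivAt)
  have hθ0 : θ 0 = Complex.arg (deriv γ 0) := by
    simp [hθdef, intervalIntegral.integral_same]
  have hγ0 : deriv γ 0 = Complex.exp (↑(θ 0) * Complex.I) := by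
    rw [hθ0]
    have h := Complex.norm_mul_exp_arg_mul_I (deriv γ 0)
    have ha : ‖deriv γ 0‖ = 1 := hunit 0
    rw [ha] at h
    simpa using h.symm
  have hwd : ∀ s, HasDerivAt (fun t => deriv γ t * Complex.exp (-(↑(θ t) * Complex.I))) 0 s := by
    intro s
    have hinner : HasDerivAt (fun t => -((↑(θ t) : ℂ) * Complex.I)) (-(↑(k s) * Complex.I)) s :=
      (((hθd s).ofReal_comp).mul_const Complex.I).neg
    have hexp : HasDerivAt (fun t => Complex.exp (-(↑(θ t) * Complex.I)))
        (Complex.exp (-(↑(θ s) * Complex.I)) * (-(↑(k s) * Complex.I))) s := hinner.cexp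
    have h := (hder2 s).mul hexp
    exact h.congr_deriv (by rw [hsecond s]; ring)
  have hwconst : ∀ s, deriv γ s * Complex.exp (-(↑(θ s) * Complex.I))
      = deriv γ 0 * Complex.exp (-(↑(θ 0) * Complex.I)) := fun s =>
    is_const_of_deriv_eq_zero (fun t => (hwd t).differentiableAt)
      (fun t => (hwd t).deriv) s 0
  have hγexp : ∀ s, deriv γ s = Complex.exp (↑(θ s) * Complex.I) := by
    intro s
    have h := hwconst s
    rw [hγ0, ← Complex.exp_add] at h
    simp only [add_neg_cancel, Complex.exp_zero] at h
    calc deriv γ s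
        = deriv γ s * Complex.exp (-(↑(θ s) * Complex.I)) * Complex.exp (↑(θ s) * Complex.I) := by
          rw [mul_assoc, ← Complex.exp_add]; simp
      _ = Complex.exp (↑(θ s) * Complex.I) := by rw [h, one_mul]
  -- main part
  intro s₀ p hp
  by_contra hpnot
  have hrange : range γ = γ '' Icc 0 (0 + L) := (hper.image_Icc hL 0).symm
  have hcomp : IsCompact (range γ) := by
    rw [hrange]; exact isCompact_Icc.image hC2.continuous
  have hclosed : IsClosed (convexHull ℝ (range γ)) :=
    (blaschkeAux_isCompact_convexHull ⟨γ 0, mem_range_self 0⟩ hcomp).isClosed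
  obtain ⟨f, u, hfu, hup⟩ :=
    geometric_hahn_banach_closed_point (convex_convexHull ℝ _) hclosed hpnot
  have hf_repr : ∀ z : ℂ, f z = f 1 * z.re + f I * z.im := by
    intro z
    have hz : z = z.re • (1:ℂ) + z.im • Complex.I := by
      simp only [smul_eq_mul, mul_one, Complex.real_smul]
      exact (Complex.re_add_im z).symm
    calc f z = f (z.re • (1:ℂ) + z.im • Complex.I) := by rw [← hz]
      _ = z.re * f 1 + z.im * f I := by
          rw [map_add, map_smul, map_smul]; simp [smul_eq_mul]
      _ = f 1 * z.re + f I * z.im := by ring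
  set v : ℂ := (↑(f 1) : ℂ) + (↑(f I) : ℂ) * Complex.I with hvdef
  have hvre : v.re = f 1 := by simp [hvdef]
  have hvim : v.im = f I := by simp [hvdef]
  have hvne : v ≠ 0 := by
    intro h0
    have h1 : f 1 = 0 := by rw [← hvre, h0, Complex.zero_re]
    have h2 : f I = 0 := by rw [← hvim, h0, Complex.zero_im]
    have hz : ∀ z, f z = 0 := fun z => by rw [hf_repr z, h1, h2]; ring
    have ha := hfu (γ 0) (subset_convexHull ℝ _ (mem_range_self 0))
    rw [hz (γ 0)] at ha
    rw [hz p] at hup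
    linarith
  set nv : ℝ := ‖v‖ with hnvdef
  have hnv : 0 < nv := by
    rw [hnvdef]
    exact norm_pos_iff.2 hvne
  set w : ℂ := (↑(nv⁻¹) : ℂ) * v with hwdef
  have habsw : ‖w‖ = 1 := by
    rw [hwdef, norm_mul, Complex.norm_real, Real.norm_eq_abs, abs_of_pos (inv_pos.2 hnv), ← hnvdef,
      inv_mul_cancel₀ hnv.ne']
  have hwre1 : w.re = nv⁻¹ * f 1 := by
    rw [hwdef]
    simp [Complex.mul_re, hvre]
  have hwim1 : w.im = nv⁻¹ * f I := by
    rw [hwdef]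
    simp [Complex.mul_im, hvim]
  set β : ℝ := Complex.arg w with hβdef
  have hwexp : Complex.exp (↑β * Complex.I) = w := by
    have h := Complex.norm_mul_exp_arg_mul_I w
    rw [habsw] at h
    simpa using h
  set m : ℤ := ⌊(θ s₀ - β + Real.pi/2 + Real.pi) / (2*Real.pi)⌋ with hmdef
  set α : ℝ := β - Real.pi/2 + 2*Real.pi*m with hαdef
  have h2π : (0:ℝ) < 2*Real.pi := by linarith
  have hφIco : θ s₀ - α ∈ Set.Ico (-Real.pi) Real.pi := by
    have hm1 : (m:ℝ) ≤ (θ s₀ - β + Real.pi/2 + Real.pi) / (2*Real.pi) := Int.floor_le _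
    have hm2 : (θ s₀ - β + Real.pi/2 + Real.pi) / (2*Real.pi) < m + 1 := Int.lt_floor_add_one _
    rw [le_div_iff₀ h2π] at hm1
    rw [div_lt_iff₀ h2π] at hm2
    constructor
    · rw [hαdef]; nlinarith
    · rw [hαdef]; nlinarith
  have hwexpα : Complex.exp (↑(α + Real.pi/2) * Complex.I) = w := by
    have h1 : ((α + Real.pi/2 : ℝ) : ℂ) * Complex.I
        = ↑β * Complex.I + ↑m * (2 * ↑Real.pi * Complex.I) := by
      rw [hαdef]; push_cast; ring
    rw [h1, Complex.exp_add, Complex.exp_int_mul_two_pi_mul_I, mul_one, hwexp]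
  have hwre : w.re = -Real.sin α := by
    rw [← hwexpα, Complex.exp_ofReal_mul_I_re]
    exact Real.cos_add_pi_div_two α
  have hwim : w.im = Real.cos α := by
    rw [← hwexpα, Complex.exp_ofReal_mul_I_im]
    exact Real.sin_add_pi_div_two α
  set F : ℂ → ℝ := fun z => w.re * z.re + w.im * z.im with hFdef
  have hFf : ∀ z, f z = nv * F z := by
    intro z
    rw [hf_repr z, hFdef]
    simp only [hwre1, hwim1]
    field_simp
  set g : ℝ → ℝ := fun s => F (γ s) with hgdef
  have hperg : Function.Periodic g L := fun s => by
    simp only [hgdef]; rw [hper s]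
  have hgd : ∀ s, HasDerivAt g (Real.sin (θ s - α)) s := by
    intro s
    have hre : HasDerivAt (fun t => (γ t).re) ((deriv γ s).re) s := by
      exact Complex.reCLM.hasFDerivAt.comp_hasDerivAt s (hder1 s)
    have him : HasDerivAt (fun t => (γ t).im) ((deriv γ s).im) s := by
      exact Complex.imCLM.hasFDerivAt.comp_hasDerivAt s (hder1 s)
    have h := (hre.const_mul w.re).add (him.const_mul w.im)
    have heq : w.re * (deriv γ s).re + w.im * (deriv γ s).im = Real.sin (θ s - α) := by
      rw [hγexp s, Complex.exp_ofReal_mul_I_re, Complex.exp_ofReal_mul_I_im, hwre, hwim,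
        Real.sin_sub]
      ring
    rw [heq] at h
    exact h
  obtain ⟨s₁, hkey⟩ := blaschkeAux_key γ θ k g L lam α s₀ hL hlam
    (fun s => by rw [← hγexp s]; exact hder1 s) hper hθd
    (fun s => (hcurv s).1) (fun s => (hcurv s).2) hgd hperg hφIco
  set c : ℂ := γ s₀ + (↑(1/lam) : ℝ) * Complex.I * deriv γ s₀ with hcdef
  have hd : ‖p - c‖ ≤ 1/lam := by
    rw [← Complex.dist_eq]
    exact Metric.mem_closedBall.mp hp
  have hlin : F p - F c = F (p - c) := by
    simp only [hFdef, Complex.sub_re, Complex.sub_im]; ring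
  have hFz : F (p - c) ≤ ‖p - c‖ := by
    have h1 : F (p - c) = ((starRingEnd ℂ) w * (p - c)).re := by
      simp only [hFdef, Complex.mul_re, Complex.conj_re, Complex.conj_im]; ring
    rw [h1]
    calc ((starRingEnd ℂ) w * (p - c)).re
        ≤ |((starRingEnd ℂ) w * (p - c)).re| := le_abs_self _
      _ ≤ ‖(starRingEnd ℂ) w * (p - c)‖ := Complex.abs_re_le_norm _
      _ = ‖p - c‖ := by rw [norm_mul, Complex.norm_conj, habsw, one_mul]
  have hFc : F c = g s₀ + (1/lam) * Real.cos (θ s₀ - α) := by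
    simp only [hFdef, hgdef, hcdef, Complex.add_re, Complex.add_im, Complex.mul_re,
      Complex.mul_im, Complex.I_re, Complex.I_im, Complex.ofReal_re, Complex.ofReal_im,
      hγexp s₀, Complex.exp_ofReal_mul_I_re, Complex.exp_ofReal_mul_I_im, hwre, hwim,
      Real.cos_sub]
    ring
  have hstep1 : F p - F c ≤ 1 / lam := by rw [hlin]; exact hFz.trans hd
  have hstep3 : F p ≤ 1 / lam + F c := sub_le_iff_le_add.mp hstep1
  have hchain : F p ≤ F (γ s₁) :=
    calc F p ≤ 1 / lam + F c := hstep3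
      _ = g s₀ + (1 + Real.cos (θ s₀ - α)) / lam := by rw [hFc]; ring
      _ ≤ g s₁ := hkey
      _ = F (γ s₁) := rfl
  have hfp : f p ≤ f (γ s₁) := by
    rw [hFf p, hFf (γ s₁)]
    exact mul_le_mul_of_nonneg_left hchain hnv.le
  have h1 := hfu (γ s₁) (subset_convexHull ℝ _ (mem_range_self s₁))
  exact lt_irrefl (f p) (lt_of_le_of_lt hfp (lt_trans h1 hup))
end

section
/- Let λ > 0 and let h : ℝ → ℝ be a twice differentiable 2π-periodic function with h(0) = 0 and h'(0) = 0, such that for all φ the quantity R(φ) := h(φ) + h''(φ) satisfies 0 ≤ R(φ) ≤ 1/λ. Then h(φ) ≤ (1/λ)·(1 − cos φ) for all φ ∈ [0, 2π]. -/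
open Real Set

/-- Key lemma: if `g` is twice differentiable, `g 0 = 0`, `g' 0 = 0`, and
`0 ≤ g + g''` everywhere, then `0 ≤ g` on `[0, π]`. -/
lemma sfe_key (g : ℝ → ℝ) (hg : Differentiable ℝ g) (hg2 : Differentiable ℝ (deriv g))
    (hg0 : g 0 = 0) (hg0' : deriv g 0 = 0)
    (hpos : ∀ x, 0 ≤ g x + deriv (deriv g) x) :
    ∀ x ∈ Set.Icc (0 : ℝ) π, 0 ≤ g x := by
  set f : ℝ → ℝ := fun x => deriv g x * Real.sin x - g x * Real.cos x with hf_def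
  have hf' : ∀ x, HasDerivAt f ((g x + deriv (deriv g) x) * Real.sin x) x := by
    intro x
    have h1 : HasDerivAt (fun x => deriv g x * Real.sin x)
        (deriv (deriv g) x * Real.sin x + deriv g x * Real.cos x) x :=
      (hg2 x).hasDerivAt.mul (Real.hasDerivAt_sin x)
    have h2 : HasDerivAt (fun x => g x * Real.cos x)
        (deriv g x * Real.cos x + g x * (-Real.sin x)) x :=
      (hg x).hasDerivAt.mul (Real.hasDerivAt_cos x)
    have := h1.sub h2
    refine this.congr_deriv ?_
    ring
  have hf0 : f 0 = 0 := by simp [hf_def, hg0, hg0']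
  -- f is monotone on [0, π]
  have hfmono : MonotoneOn f (Set.Icc 0 π) := by
    apply monotoneOn_of_deriv_nonneg (convex_Icc 0 π)
    · exact fun x _ => ((hf' x).continuousAt).continuousWithinAt
    · exact fun x _ => ((hf' x).differentiableAt).differentiableWithinAt
    · intro x hx
      rw [interior_Icc] at hx
      rw [(hf' x).deriv]
      exact mul_nonneg (hpos x) (Real.sin_nonneg_of_nonneg_of_le_pi hx.1.le hx.2.le)
  have hfnn : ∀ x ∈ Set.Icc (0 : ℝ) π, 0 ≤ f x := by
    intro x hx
    have := hfmono (Set.left_mem_Icc.2 Real.pi_pos.le) hx hx.1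
    rwa [hf0] at this
  -- u = g / sin is monotone on (0, π)
  set u : ℝ → ℝ := fun x => g x / Real.sin x with hu_def
  have hu' : ∀ x ∈ Set.Ioo (0 : ℝ) π, HasDerivAt u (f x / Real.sin x ^ 2) x := by
    intro x hx
    have hs : Real.sin x ≠ 0 := ne_of_gt (Real.sin_pos_of_pos_of_lt_pi hx.1 hx.2)
    have := ((hg x).hasDerivAt).div (Real.hasDerivAt_sin x) hs
    exact this
  have humono : MonotoneOn u (Set.Ioo 0 π) := by
    apply monotoneOn_of_deriv_nonneg (convex_Ioo 0 π)
    · exact fun x hx => ((hu' x hx).continuousAt).continuousWithinAt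
    · rw [interior_Ioo]; exact fun x hx => ((hu' x hx).differentiableAt).differentiableWithinAt
    · intro x hx
      rw [interior_Ioo] at hx
      rw [(hu' x hx).deriv]
      exact div_nonneg (hfnn x ⟨hx.1.le, hx.2.le⟩) (sq_nonneg _)
  -- u tends to 0 as x → 0⁺
  have hslope_g : Filter.Tendsto (fun x => g x / x) (nhdsWithin 0 {(0:ℝ)}ᶜ) (nhds 0) := by
    have := (hg 0).hasDerivAt
    rw [hasDerivAt_iff_tendsto_slope] at this
    rw [hg0'] at this
    refine this.congr' ?_
    filter_upwards [self_mem_nhdsWithin] with x hx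
    simp [slope_def_field, div_eq_iff, hg0]
  have hslope_sin : Filter.Tendsto (fun x => Real.sin x / x) (nhdsWithin 0 {(0:ℝ)}ᶜ)
      (nhds 1) := by
    have := Real.hasDerivAt_sin 0
    rw [hasDerivAt_iff_tendsto_slope] at this
    rw [Real.cos_zero] at this
    refine this.congr' ?_
    filter_upwards [self_mem_nhdsWithin] with x hx
    simp [slope_def_field, div_eq_iff, Real.sin_zero]
  have hulim : Filter.Tendsto u (nhdsWithin 0 (Set.Ioi 0)) (nhds 0) := by
    have hdiv : Filter.Tendsto (fun x => (g x / x) / (Real.sin x / x))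
        (nhdsWithin 0 {(0:ℝ)}ᶜ) (nhds (0 / 1)) := hslope_g.div hslope_sin one_ne_zero
    rw [zero_div] at hdiv
    have hmono : nhdsWithin (0:ℝ) (Set.Ioi 0) ≤ nhdsWithin 0 {(0:ℝ)}ᶜ :=
      nhdsWithin_mono 0 (fun x hx => ne_of_gt hx)
    refine (hdiv.mono_left hmono).congr' ?_
    filter_upwards [self_mem_nhdsWithin] with x hx
    have hx0 : x ≠ 0 := ne_of_gt hx
    show g x / x / (Real.sin x / x) = g x / Real.sin x
    rw [div_div_div_cancel_right₀ hx0]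
  -- 0 ≤ g on (0, π)
  have hIoo : ∀ x ∈ Set.Ioo (0 : ℝ) π, 0 ≤ g x := by
    intro x hx
    have hux : 0 ≤ u x := by
      refine le_of_tendsto hulim ?_
      filter_upwards [Ioo_mem_nhdsGT_of_mem (Set.left_mem_Ico.2 hx.1)] with a ha
      exact humono ⟨ha.1, ha.2.trans hx.2⟩ hx ha.2.le
    have hs : 0 < Real.sin x := Real.sin_pos_of_pos_of_lt_pi hx.1 hx.2
    have hmul := mul_nonneg hux hs.le
    rwa [div_mul_cancel₀ (g x) hs.ne'] at hmul
  intro x hx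
  rcases eq_or_lt_of_le hx.1 with h0 | h0
  · rw [← h0, hg0]
  rcases eq_or_lt_of_le hx.2 with hpi | hpi
  · -- x = π: use continuity
    subst hpi
    have hc : Filter.Tendsto g (nhdsWithin π (Set.Iio π)) (nhds (g π)) :=
      ((hg π).continuousAt).continuousWithinAt
    refine ge_of_tendsto hc ?_
    filter_upwards [Ioo_mem_nhdsLT_of_mem (Set.right_mem_Ioc.2 Real.pi_pos)] with a ha
    exact hIoo a ha
  · exact hIoo x ⟨h0, hpi⟩

/-- **Support-function estimate in Lemma 1(I).** If `h` is a twice differentiable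
`2π`-periodic function with `h 0 = 0`, `h' 0 = 0` and `0 ≤ h + h'' ≤ 1/lam`, then
`h φ ≤ (1/lam) * (1 - cos φ)` on `[0, 2π]`. -/
theorem support_function_estimate (lam : ℝ) (hlam : 0 < lam) (h : ℝ → ℝ)
    (hdiff : Differentiable ℝ h) (hdiff2 : Differentiable ℝ (deriv h))
    (hper : Function.Periodic h (2 * π))
    (h0 : h 0 = 0) (h0' : deriv h 0 = 0)
    (hR : ∀ φ : ℝ, 0 ≤ h φ + deriv (deriv h) φ ∧ h φ + deriv (deriv h) φ ≤ 1 / lam) :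
    ∀ φ ∈ Set.Icc (0 : ℝ) (2 * π), h φ ≤ (1 / lam) * (1 - Real.cos φ) := by
  set g : ℝ → ℝ := fun x => (1 / lam) * (1 - Real.cos x) - h x with hg_def
  have hgd : ∀ x, HasDerivAt g ((1 / lam) * Real.sin x - deriv h x) x := by
    intro x
    have h1 : HasDerivAt (fun x => (1 / lam) * (1 - Real.cos x))
        ((1 / lam) * (0 - (-Real.sin x))) x :=
      ((hasDerivAt_const x (1:ℝ)).sub (Real.hasDerivAt_cos x)).const_mul (1 / lam)
    have := h1.sub (hdiff x).hasDerivAt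
    refine this.congr_deriv ?_
    ring
  have hgdiff : Differentiable ℝ g := fun x => (hgd x).differentiableAt
  have hgderiv : deriv g = fun x => (1 / lam) * Real.sin x - deriv h x :=
    funext fun x => (hgd x).deriv
  have hgd2 : ∀ x, HasDerivAt (deriv g) ((1 / lam) * Real.cos x - deriv (deriv h) x) x := by
    intro x
    rw [hgderiv]
    exact ((Real.hasDerivAt_sin x).const_mul (1 / lam)).sub (hdiff2 x).hasDerivAt
  have hgdiff2 : Differentiable ℝ (deriv g) := fun x => (hgd2 x).differentiableAt
  have hgderiv2 : deriv (deriv g) = fun x => (1 / lam) * Real.cos x - deriv (deriv h) x :=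
    funext fun x => (hgd2 x).deriv
  have hgpos : ∀ x, 0 ≤ g x + deriv (deriv g) x := by
    intro x
    rw [hgderiv2, hg_def]
    have := (hR x).2
    simp only
    linarith
  -- values at 0 and 2π
  have hg0 : g 0 = 0 := by simp [hg_def, h0]
  have hg0' : deriv g 0 = 0 := by rw [hgderiv]; simp [h0']
  have hper' : deriv h (2 * π) = 0 := by
    have : (fun y => h (y + 2 * π)) = h := funext fun y => hper y
    have h2 : deriv h (0 + 2 * π) = deriv (fun y => h (y + 2 * π)) 0 :=
      (deriv_comp_add_const h (2 * π) 0).symm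
    rw [this, h0'] at h2
    simpa using h2
  have hg2pi : g (2 * π) = 0 := by
    have : h (2 * π) = 0 := by
      have := hper 0
      simpa [h0] using this
    simp [hg_def, Real.cos_two_pi, this]
  have hg2pi' : deriv g (2 * π) = 0 := by
    rw [hgderiv]
    simp [Real.sin_two_pi, hper']
  -- first half: 0 ≤ g on [0, π]
  have hfirst := sfe_key g hgdiff hgdiff2 hg0 hg0' hgpos
  -- second half: apply key to g2 = g (2π - ·)
  set g2 : ℝ → ℝ := fun x => g (2 * π - x) with hg2_def
  have hg2d : ∀ x, HasDerivAt g2 (-(deriv g (2 * π - x))) x := by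
    intro x
    have := ((hgdiff (2 * π - x)).hasDerivAt).comp x
      (((hasDerivAt_const x (2 * π)).sub (hasDerivAt_id x)))
    refine this.congr_deriv ?_
    simp
  have hg2diff : Differentiable ℝ g2 := fun x => (hg2d x).differentiableAt
  have hg2deriv : deriv g2 = fun x => -(deriv g (2 * π - x)) :=
    funext fun x => (hg2d x).deriv
  have hg2d2 : ∀ x, HasDerivAt (deriv g2) (deriv (deriv g) (2 * π - x)) x := by
    intro x
    rw [hg2deriv]
    have := (((hgdiff2 (2 * π - x)).hasDerivAt).comp x
      (((hasDerivAt_const x (2 * π)).sub (hasDerivAt_id x)))).neg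
    refine this.congr_deriv ?_
    simp
  have hg2diff2 : Differentiable ℝ (deriv g2) := fun x => (hg2d2 x).differentiableAt
  have hg2pos : ∀ x, 0 ≤ g2 x + deriv (deriv g2) x := by
    intro x
    rw [(hg2d2 x).deriv]
    exact hgpos (2 * π - x)
  have hg20 : g2 0 = 0 := by simp [hg2_def, hg2pi]
  have hg20' : deriv g2 0 = 0 := by rw [hg2deriv]; simp [hg2pi']
  have hsecond := sfe_key g2 hg2diff hg2diff2 hg20 hg20' hg2pos
  -- combine
  intro φ hφ
  have key : 0 ≤ g φ := by
    rcases le_total φ π with hle | hge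
    · exact hfirst φ ⟨hφ.1, hle⟩
    · have h1 : 2 * π - φ ∈ Set.Icc (0 : ℝ) π := ⟨by linarith [hφ.2], by linarith⟩
      have := hsecond (2 * π - φ) h1
      rw [hg2_def] at this
      simpa using this
  rw [hg_def] at key
  simp only at key
  linarith
end
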